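/- Every F-linear automorphism of the formal power series ring F[[x]] is given by substitution x ↦ a₁x + a₂x² + ⋯ for some coefficients aᵢ ∈ F with a₁ ≠ 0. In particular, every F-algebra automorphism of F[[x]] is continuous for the (x)-adic topology. -/

import Mathlib

open PowerSeries

/-- Formal composition `f(ψ)` of power series, defined coefficientwise (this is the usual
substitution when `ψ` has zero constant term): the `n`-th coefficient of `f(ψ)` only
depends on the truncation of `f` at order `n + 1`. -/
noncomputable def PowerSeries.compose {F : Type*} [CommRing F]
    (f ψ : PowerSeries F) : PowerSeries F :=
  PowerSeries.mk fun n => PowerSeries.coeff n (Polynomial.aeval ψ (f.trunc (n + 1)))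

/-- Every `F`-algebra automorphism `φ` of `F[[x]]` is given by substitution
`x ↦ a₁x + a₂x² + ⋯` with `a₁ ≠ 0`: the series `φ(X)` has zero constant term and nonzero
linear coefficient, and `φ(f) = f(φ(X))` for all `f`.  In particular `φ` is continuous for
the `(x)`-adic topology: for every `n` there is an `m` with `φ(X^m F[[x]]) ⊆ X^n F[[x]]`. -/
theorem powerSeries_algebra_aut_is_substitution
    (F : Type*) [Field F] (φ : PowerSeries F ≃ₐ[F] PowerSeries F) :
    PowerSeries.constantCoeff (φ (PowerSeries.X)) = 0 ∧
    PowerSeries.coeff 1 (φ (PowerSeries.X)) ≠ 0 ∧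
    (∀ f : PowerSeries F, φ f = PowerSeries.compose f (φ (PowerSeries.X))) ∧
    (∀ n : ℕ, ∃ m : ℕ, ∀ f : PowerSeries F,
      (PowerSeries.X : PowerSeries F) ^ m ∣ f → (PowerSeries.X : PowerSeries F) ^ n ∣ φ f) := by
  -- constant coefficient of φ X is zero, since X and hence φ X is not a unit
  have hX : ¬ IsUnit (X : PowerSeries F) := by
    rw [PowerSeries.isUnit_iff_constantCoeff]
    simp
  have h0 : PowerSeries.constantCoeff (φ PowerSeries.X) = 0 := by
    by_contra h
    have := ((PowerSeries.isUnit_iff_constantCoeff.mpr (isUnit_iff_ne_zero.mpr h)).map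
      φ.symm.toAlgHom)
    simp only [AlgEquiv.toAlgHom_eq_coe, AlgHom.coe_coe, AlgEquiv.symm_apply_apply, AlgEquiv.coe_toAlgHom] at this
    exact hX this
  have hXdvd : (X : PowerSeries F) ∣ φ X := PowerSeries.X_dvd_iff.mpr h0
  -- symmetric fact for φ⁻¹
  have h0' : PowerSeries.constantCoeff (φ.symm PowerSeries.X) = 0 := by
    by_contra h
    have := ((PowerSeries.isUnit_iff_constantCoeff.mpr (isUnit_iff_ne_zero.mpr h)).map
      φ.toAlgHom)
    simp only [AlgEquiv.toAlgHom_eq_coe, AlgHom.coe_coe, AlgEquiv.apply_symm_apply, AlgEquiv.coe_toAlgHom] at this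
    exact hX this
  -- nonzero linear coefficient
  have h1 : PowerSeries.coeff 1 (φ PowerSeries.X) ≠ 0 := by
    intro h
    have hsq : (X : PowerSeries F) ^ 2 ∣ φ X := by
      rw [PowerSeries.X_pow_dvd_iff]
      intro m hm
      interval_cases m
      · simpa using h0
      · exact h
    obtain ⟨g, hg⟩ := PowerSeries.X_dvd_iff.mpr h0'
    have : (X : PowerSeries F) ^ 2 ∣ (X : PowerSeries F) := by
      calc (X : PowerSeries F) ^ 2 ∣ φ X * φ g := hsq.mul_right _
      _ = φ (X * g) := (map_mul φ _ _).symm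
      _ = φ (φ.symm X) := by rw [← hg]
      _ = X := φ.apply_symm_apply _
    rw [PowerSeries.X_pow_dvd_iff] at this
    simpa using this 1 (by norm_num)
  -- key: φ applied to a polynomial (cast into power series) is aeval of φ X
  have hpoly : ∀ p : Polynomial F, φ (p : PowerSeries F) = Polynomial.aeval (φ X) p := by
    intro p
    have : (φ.toAlgHom.comp (Polynomial.coeToPowerSeries.algHom F)) =
        Polynomial.aeval (φ X) := by
      apply Polynomial.algHom_ext
      simp [Polynomial.coeToPowerSeries.algHom_apply]
    simpa using congrArg (fun ψ => ψ p) this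
  have hcomp : ∀ f : PowerSeries F, φ f = PowerSeries.compose f (φ PowerSeries.X) := by
    intro f
    ext n
    rw [PowerSeries.compose, PowerSeries.coeff_mk, ← hpoly]
    -- f - trunc (n+1) f is divisible by X^(n+1)
    have hdvd : (X : PowerSeries F) ^ (n + 1) ∣ (f - (f.trunc (n + 1) : PowerSeries F)) := by
      rw [PowerSeries.X_pow_dvd_iff]
      intro m hm
      simp [Polynomial.coeff_coe, PowerSeries.coeff_trunc, hm]
    obtain ⟨g, hg⟩ := hdvd
    have : φ f = φ ((f.trunc (n + 1) : PowerSeries F)) + (φ X) ^ (n + 1) * φ g := by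
      rw [← map_pow, ← map_mul, ← map_add, ← hg]
      ring_nf
    rw [this, map_add]
    have : PowerSeries.coeff n ((φ X) ^ (n + 1) * φ g) = 0 := by
      have : (X : PowerSeries F) ^ (n + 1) ∣ (φ X) ^ (n + 1) * φ g :=
        Dvd.dvd.mul_right (pow_dvd_pow_of_dvd hXdvd _) _
      rw [PowerSeries.X_pow_dvd_iff] at this
      exact this n (by omega)
    rw [this, add_zero]
  refine ⟨h0, h1, hcomp, fun n => ⟨n, fun f hf => ?_⟩⟩
  obtain ⟨g, hg⟩ := hf
  rw [hg, map_mul, map_pow]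
  exact Dvd.dvd.mul_right (pow_dvd_pow_of_dvd hXdvd _) _
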